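/- If I ⊆ R = k[x_1,...,x_d] is a zero-dimensional monomial ideal, then d·dim_k(R/I) ≤ dim_k(I/I²). Equivalently, every monomial semigroup S ⊆ ℕ^d satisfies d·c(S) ≤ e(S). -/

import Mathlib

namespace Stmt15

open Finset

/-- `two B` is the set of points all of whose decompositions hit `B`.
If `B = Aᶜ` for an upward-closed `A` then `two B` is the complement of `A + A`. -/
def two {α : Type*} [Add α] (B : Set α) : Set α := {x | ∀ u v, u + v = x → u ∈ B ∨ v ∈ B}

/-- downward closed -/
def DC {α : Type*} [LE α] (B : Set α) : Prop := ∀ ⦃x⦄, x ∈ B → ∀ ⦃y⦄, y ≤ x → y ∈ B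

lemma nat_dc_lt {S : Set ℕ} (hfin : S.Finite) (hdc : ∀ x ∈ S, ∀ y ≤ x, y ∈ S)
    {y : ℕ} (hy : y < S.ncard) : y ∈ S := by
  by_contra hyS
  have hsub : S ⊆ Set.Iio y := by
    intro s hs
    by_contra hlt
    exact hyS (hdc s hs y (Set.notMem_Iio.mp hlt))
  have h1 := Set.ncard_le_ncard hsub (Set.finite_Iio y)
  have h2 : (Set.Iio y).ncard = y := by
    rw [← Finset.coe_range, Set.ncard_coe_finset, Finset.card_range]
  omega

lemma iic_finite {k : ℕ} (b : Fin k → ℕ) : (Set.Iic b).Finite := by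
  have h : Set.Iic b = Set.pi Set.univ (fun i => Set.Iic (b i)) := by
    ext x
    simp [Set.mem_pi, Pi.le_def]
  rw [h]
  exact Set.Finite.pi fun i => Set.finite_Iic _

lemma two_finite {k : ℕ} {B : Set (Fin k → ℕ)} (hB : B.Finite) : (two B).Finite := by
  have hsub : two B ⊆ ⋃ b ∈ B, Set.Iic (b + b + 1) := by
    intro x hx
    rcases hx (fun i => (x i + 1) / 2) (fun i => x i / 2)
        (funext fun i => by simp only [Pi.add_apply]; omega) with h | h
    · refine Set.mem_biUnion h ?_
      simp only [Set.mem_Iic, Pi.le_def, Pi.add_apply, Pi.one_apply]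
      intro i
      omega
    · refine Set.mem_biUnion h ?_
      simp only [Set.mem_Iic, Pi.le_def, Pi.add_apply, Pi.one_apply]
      intro i
      omega
  exact (hB.biUnion fun b _ => iic_finite _).subset hsub

lemma init_add {k : ℕ} (u v : Fin (k+1) → ℕ) :
    Fin.init (u + v) = Fin.init u + Fin.init v := rfl

lemma snoc_le_snoc {k : ℕ} {z z' : Fin k → ℕ} {y y' : ℕ} (hz : z ≤ z') (hy : y ≤ y') :
    (Fin.snoc z y : Fin (k+1) → ℕ) ≤ Fin.snoc z' y' := by
  rw [Pi.le_def]
  intro i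
  induction i using Fin.lastCases with
  | last => simpa using hy
  | cast j => simpa using (Pi.le_def.mp hz) j

lemma slice_finite {k : ℕ} {C : Set (Fin (k+1) → ℕ)} (hC : C.Finite) (z : Fin k → ℕ) :
    {y | (Fin.snoc z y : Fin (k+1) → ℕ) ∈ C}.Finite := by
  apply (hC.image (fun x => x (Fin.last k))).subset
  intro y hy
  exact ⟨Fin.snoc z y, hy, by simp⟩

lemma cnt {k : ℕ} {C : Set (Fin (k+1) → ℕ)} (hC : C.Finite) {Z : Finset (Fin k → ℕ)}
    (hZ : ∀ x ∈ C, Fin.init x ∈ Z) :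
    C.ncard = ∑ z ∈ Z, {y | (Fin.snoc z y : Fin (k+1) → ℕ) ∈ C}.ncard := by
  classical
  rw [Set.ncard_eq_toFinset_card _ hC]
  rw [Finset.card_eq_sum_card_fiberwise (f := Fin.init) (t := Z)
    (fun x hx => hZ x (hC.mem_toFinset.mp hx))]
  refine Finset.sum_congr rfl fun z _ => ?_
  have himg : {y | (Fin.snoc z y : Fin (k+1) → ℕ) ∈ C}
      = (fun x : Fin (k+1) → ℕ => x (Fin.last k)) ''
        ↑(hC.toFinset.filter fun x => Fin.init x = z) := by
    ext y
    constructor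
    · intro hy
      refine ⟨Fin.snoc z y, ?_, by simp⟩
      simp only [Finset.coe_filter, Set.mem_setOf_eq, Set.Finite.mem_toFinset]
      exact ⟨hy, by simp⟩
    · rintro ⟨x, hx, rfl⟩
      simp only [Finset.coe_filter, Set.mem_setOf_eq, Set.Finite.mem_toFinset] at hx
      obtain ⟨hxC, hxz⟩ := hx
      show Fin.snoc z (x (Fin.last k)) ∈ C
      rw [← hxz, Fin.snoc_init_self]
      exact hxC
  have hinj : Set.InjOn (fun x : Fin (k+1) → ℕ => x (Fin.last k))
      ↑(hC.toFinset.filter fun x => Fin.init x = z) := by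
    intro a ha b hb hab
    simp only [Finset.coe_filter, Set.mem_setOf_eq, Set.Finite.mem_toFinset] at ha hb
    calc a = Fin.snoc (Fin.init a) (a (Fin.last k)) := (Fin.snoc_init_self a).symm
      _ = Fin.snoc (Fin.init b) (b (Fin.last k)) := by
          rw [ha.2, hb.2]
          exact congrArg _ hab
      _ = b := Fin.snoc_init_self b
  rw [himg, Set.ncard_image_of_injOn hinj, Set.ncard_coe_finset]

lemma sum_ind {T m : ℕ} (hm : m ≤ T) :
    (∑ t ∈ Finset.range T, if t < m then (1:ℕ) else 0) = m := by
  classical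
  have h : (Finset.range T).filter (fun t => t < m) = Finset.range m := by
    ext t
    simp only [Finset.mem_filter, Finset.mem_range]
    omega
  rw [Finset.sum_boole, h, Finset.card_range, Nat.cast_id]

/-- Core combinatorial theorem: if `B ⊆ ℕ^d` is finite and downward closed then
`(d+1)·|B| ≤ |two B|`. -/
theorem core : ∀ (d : ℕ) (B : Set (Fin d → ℕ)), DC B → B.Finite →
    (d + 1) * B.ncard ≤ (two B).ncard := by
  intro d
  induction d with
  | zero =>
    intro B hdc hfin
    have heq : ∀ u v : Fin 0 → ℕ, u = v := fun u v => funext fun i => i.elim0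
    rcases Set.eq_empty_or_nonempty B with rfl | ⟨x, hx⟩
    · simp
    · have hx2 : x ∈ two B := fun u v _ => Or.inl (heq u x ▸ hx)
      have hB : B = {x} := Set.eq_singleton_iff_unique_mem.mpr ⟨hx, fun y _ => heq y x⟩
      have hB2 : two B = {x} := Set.eq_singleton_iff_unique_mem.mpr ⟨hx2, fun y _ => heq y x⟩
      rw [hB2, hB]
      simp
  | succ d IH =>
    intro B hdc hfin
    classical
    set h : (Fin d → ℕ) → ℕ := fun z => {y | (Fin.snoc z y : Fin (d+1) → ℕ) ∈ B}.ncard with hh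
    have slfin : ∀ z, {y | (Fin.snoc z y : Fin (d+1) → ℕ) ∈ B}.Finite :=
      fun z => slice_finite hfin z
    have slmem : ∀ z y, y < h z → (Fin.snoc z y : Fin (d+1) → ℕ) ∈ B := by
      intro z y hy
      refine nat_dc_lt (slfin z) ?_ hy
      intro a ha b hb
      exact hdc ha (snoc_le_snoc (le_refl z) hb)
    have hmono : ∀ z z', z ≤ z' → h z' ≤ h z := by
      intro z z' hzz
      apply Set.ncard_le_ncard ?_ (slfin z)
      intro y hy
      exact hdc hy (snoc_le_snoc hzz (le_refl y))
    set T := h 0 with hT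
    have hzT : ∀ z, h z ≤ T := fun z => hmono 0 z (fun i => Nat.zero_le _)
    have Sdc : ∀ t : ℕ, DC {z : Fin d → ℕ | t < h z} := by
      intro t z hz z' hz'
      exact lt_of_lt_of_le hz (hmono z' z hz')
    have hSsub : ∀ t : ℕ, {z : Fin d → ℕ | t < h z} ⊆ Fin.init '' B := by
      intro t z hz
      have hzpos : 0 < h z := Nat.lt_of_le_of_lt (Nat.zero_le t) hz
      exact ⟨Fin.snoc z 0, slmem z 0 hzpos, by simp⟩
    have Sfin : ∀ t : ℕ, ({z : Fin d → ℕ | t < h z}).Finite :=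
      fun t => (hfin.image _).subset (hSsub t)
    set N : (Fin d → ℕ) → ℕ := fun z => ∑ t ∈ Finset.range T,
        ((if t < h z then 1 else 0) +
          (if z ∈ two {z' : Fin d → ℕ | t < h z'} then 1 else 0)) with hN
    have KPL : ∀ z y, y < N z → (Fin.snoc z y : Fin (d+1) → ℕ) ∈ two B := by
      intro z y hy u v huv
      by_contra hcon
      push_neg at hcon
      obtain ⟨hu, hv⟩ := hcon
      have h1 : h (Fin.init u) ≤ u (Fin.last d) := by
        by_contra h'
        push_neg at h'
        have hm := slmem _ _ h'
        rw [Fin.snoc_init_self] at hm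
        exact hu hm
      have h2 : h (Fin.init v) ≤ v (Fin.last d) := by
        by_contra h'
        push_neg at h'
        have hm := slmem _ _ h'
        rw [Fin.snoc_init_self] at hm
        exact hv hm
      have hz12 : Fin.init u + Fin.init v = z := by
        have h3 := congrArg Fin.init huv
        rwa [init_add, Fin.init_snoc] at h3
      have hy12 : u (Fin.last d) + v (Fin.last d) = y := by
        have h3 := congrArg (fun f : Fin (d+1) → ℕ => f (Fin.last d)) huv
        simpa using h3
      have hNle : N z ≤ h (Fin.init u) + h (Fin.init v) := by
        have e1 : h (Fin.init u) + h (Fin.init v) = ∑ t ∈ Finset.range T,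
            ((if t < h (Fin.init u) then 1 else 0) +
              (if t < h (Fin.init v) then 1 else 0)) := by
          rw [Finset.sum_add_distrib, sum_ind (hzT _), sum_ind (hzT _)]
        rw [hN, e1]
        apply Finset.sum_le_sum
        intro t _
        by_cases hzS : t < h z
        · have l1 : h z ≤ h (Fin.init u) := hmono _ _ (hz12 ▸ le_self_add)
          have l2 : h z ≤ h (Fin.init v) := hmono _ _ (hz12 ▸ le_add_self)
          split_ifs <;> omega
        · by_cases hzt : z ∈ two {z' : Fin d → ℕ | t < h z'}
          · rcases hzt _ _ hz12 with hc | hc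
            · simp only [Set.mem_setOf_eq] at hc
              split_ifs <;> omega
            · simp only [Set.mem_setOf_eq] at hc
              split_ifs <;> omega
          · split_ifs <;> omega
      omega
    have twoBfin : (two B).Finite := two_finite hfin
    set Z' : Finset (Fin d → ℕ) := (hfin.image Fin.init).toFinset ∪
        (((twoBfin.image Fin.init).toFinset) ∪
          (Finset.range T).biUnion fun t => (two_finite (Sfin t)).toFinset) with hZ'
    have hZB : ∀ x ∈ B, Fin.init x ∈ Z' := by
      intro x hx
      apply Finset.mem_union_left
      rw [Set.Finite.mem_toFinset]
      exact ⟨x, hx, rfl⟩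
    have hZ2B : ∀ x ∈ two B, Fin.init x ∈ Z' := by
      intro x hx
      apply Finset.mem_union_right
      apply Finset.mem_union_left
      rw [Set.Finite.mem_toFinset]
      exact ⟨x, hx, rfl⟩
    have hStZ : ∀ t z, t < h z → z ∈ Z' := by
      intro t z hz
      apply Finset.mem_union_left
      rw [Set.Finite.mem_toFinset]
      exact hSsub t hz
    have htwoStZ : ∀ t, t < T → ∀ z, z ∈ two {z' : Fin d → ℕ | t < h z'} → z ∈ Z' := by
      intro t ht z hz
      apply Finset.mem_union_right
      apply Finset.mem_union_right
      exact Finset.mem_biUnion.mpr ⟨t, Finset.mem_range.mpr ht, (Set.Finite.mem_toFinset _).mpr hz⟩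
    have hslice2 : ∀ z, N z ≤ {y | (Fin.snoc z y : Fin (d+1) → ℕ) ∈ two B}.ncard := by
      intro z
      have hsub : Set.Iio (N z) ⊆ {y | (Fin.snoc z y : Fin (d+1) → ℕ) ∈ two B} :=
        fun y hy => KPL z y hy
      have hIio : (Set.Iio (N z)).ncard = N z := by
        rw [← Finset.coe_range, Set.ncard_coe_finset, Finset.card_range]
      rw [← hIio]
      exact Set.ncard_le_ncard hsub (slice_finite twoBfin z)
    have sum1 : ∀ t, (∑ z ∈ Z', if t < h z then (1:ℕ) else 0)
        = ({z : Fin d → ℕ | t < h z}).ncard := by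
      intro t
      rw [Finset.sum_boole, Nat.cast_id, Set.ncard_eq_toFinset_card _ (Sfin t)]
      congr 1
      ext z
      simp only [Finset.mem_filter, Set.Finite.mem_toFinset, Set.mem_setOf_eq]
      exact ⟨fun hp => hp.2, fun hp => ⟨hStZ t z hp, hp⟩⟩
    have sum2 : ∀ t, t < T →
        (∑ z ∈ Z', if z ∈ two {z' : Fin d → ℕ | t < h z'} then (1:ℕ) else 0)
        = (two {z' : Fin d → ℕ | t < h z'}).ncard := by
      intro t ht
      rw [Finset.sum_boole, Nat.cast_id, Set.ncard_eq_toFinset_card _ (two_finite (Sfin t))]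
      congr 1
      ext z
      simp only [Finset.mem_filter, Set.Finite.mem_toFinset]
      exact ⟨fun hp => hp.2, fun hp => ⟨htwoStZ t ht z hp, hp⟩⟩
    have hswap : ∑ z ∈ Z', N z = ∑ t ∈ Finset.range T,
        (({z : Fin d → ℕ | t < h z}).ncard + (two {z' : Fin d → ℕ | t < h z'}).ncard) := by
      rw [hN, Finset.sum_comm]
      refine Finset.sum_congr rfl fun t ht => ?_
      rw [Finset.sum_add_distrib, sum1 t, sum2 t (Finset.mem_range.mp ht)]
    have hBsum : B.ncard = ∑ t ∈ Finset.range T, ({z : Fin d → ℕ | t < h z}).ncard := by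
      rw [cnt hfin hZB]
      have e : ∀ z ∈ Z', h z = ∑ t ∈ Finset.range T, (if t < h z then (1:ℕ) else 0) :=
        fun z _ => (sum_ind (hzT z)).symm
      rw [Finset.sum_congr rfl e, Finset.sum_comm]
      exact Finset.sum_congr rfl fun t _ => sum1 t
    calc (d + 1 + 1) * B.ncard
        = ∑ t ∈ Finset.range T, (d + 1 + 1) * ({z : Fin d → ℕ | t < h z}).ncard := by
          rw [hBsum, Finset.mul_sum]
      _ ≤ ∑ t ∈ Finset.range T,
          (({z : Fin d → ℕ | t < h z}).ncard + (two {z' : Fin d → ℕ | t < h z'}).ncard) := by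
          apply Finset.sum_le_sum
          intro t _
          have hIH := IH {z : Fin d → ℕ | t < h z} (Sdc t) (Sfin t)
          calc (d + 1 + 1) * ({z : Fin d → ℕ | t < h z}).ncard
              = ({z : Fin d → ℕ | t < h z}).ncard
                + (d + 1) * ({z : Fin d → ℕ | t < h z}).ncard := by ring
            _ ≤ _ := Nat.add_le_add_left hIH _
      _ = ∑ z ∈ Z', N z := hswap.symm
      _ ≤ ∑ z ∈ Z', {y | (Fin.snoc z y : Fin (d+1) → ℕ) ∈ two B}.ncard :=
          Finset.sum_le_sum fun z _ => hslice2 z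
      _ = (two B).ncard := (cnt twoBfin hZ2B).symm

end Stmt15

/-- combinatorial form: if `A ⊆ ℕ^d` is upward closed in the
componentwise order with finite complement `B` (i.e. `A` is the exponent set of a
zero-dimensional monomial ideal `I`, so `|B| = dim_k(R/I)` and
`|A \ (A+A)| = dim_k(I/I²)`), then `d·|B| ≤ |A \ (A + A)|`. -/
theorem stmt15 {d : ℕ} (A : Set (Fin d → ℕ))
    (hup : ∀ a ∈ A, ∀ b, a ≤ b → b ∈ A) (hfin : Aᶜ.Finite) :
    d * Aᶜ.ncard ≤ (A \ {x | ∃ a ∈ A, ∃ a' ∈ A, x = a + a'}).ncard := by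
  classical
  have hdc : Stmt15.DC Aᶜ := by
    intro x hx y hyx
    by_contra hyA
    exact hx (hup y (Set.notMem_compl_iff.mp hyA) x hyx)
  have hsub : Aᶜ ⊆ Stmt15.two Aᶜ := by
    intro b hb u v huv
    exact Or.inl (hdc hb (huv ▸ le_self_add))
  have heq : A \ {x | ∃ a ∈ A, ∃ a' ∈ A, x = a + a'} = Stmt15.two Aᶜ \ Aᶜ := by
    ext x
    simp only [Set.mem_diff, Set.mem_setOf_eq, Set.mem_compl_iff, not_not]
    constructor
    · rintro ⟨hxA, hno⟩
      refine ⟨?_, hxA⟩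
      intro u v huv
      by_contra hcon
      push_neg at hcon
      exact hno ⟨u, Set.notMem_compl_iff.mp hcon.1, v, Set.notMem_compl_iff.mp hcon.2, huv.symm⟩
    · rintro ⟨htwo, hxA⟩
      refine ⟨hxA, ?_⟩
      rintro ⟨a, ha, a', ha', rfl⟩
      rcases htwo a a' rfl with hc | hc
      · exact hc ha
      · exact hc ha'
  rw [heq, Set.ncard_diff hsub hfin]
  have hcore := Stmt15.core d Aᶜ hdc hfin
  apply Nat.le_sub_of_add_le
  calc d * Aᶜ.ncard + Aᶜ.ncard = (d + 1) * Aᶜ.ncard := by ring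
    _ ≤ (Stmt15.two Aᶜ).ncard := hcore
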